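/- Let E be an equivalence relation on a set X and let [Y]_E denote the E-saturation of Y ⊆ X. For any subsets A, B ⊆ X with [A]_E ∩ [B]_E ≠ ∅, the sets A' = A ∩ [B]_E and B' = B ∩ [A]_E are nonempty and satisfy [A']_E = [B']_E. -/
import Mathlib


/-- The E-saturation of a set. -/
def sat {X : Type*} (E : X → X → Prop) (Y : Set X) : Set X :=
  {x | ∃ y ∈ Y, E x y}

/-- Saturated subcondition lemma: if `[A]_E ∩ [B]_E ≠ ∅` then
`A' = A ∩ [B]_E` and `B' = B ∩ [A]_E` are nonempty with `[A']_E = [B']_E`. -/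
theorem saturated_subcondition
    {X : Type*} (E : X → X → Prop) (hE : Equivalence E)
    (A B : Set X) (h : (sat E A ∩ sat E B).Nonempty) :
    (A ∩ sat E B).Nonempty ∧ (B ∩ sat E A).Nonempty ∧
      sat E (A ∩ sat E B) = sat E (B ∩ sat E A) := by
  obtain ⟨x, ⟨a, ha, hxa⟩, ⟨b, hb, hxb⟩⟩ := h
  have hab : E a b := hE.trans (hE.symm hxa) hxb
  refine ⟨⟨a, ha, b, hb, hab⟩, ⟨b, hb, a, ha, hE.symm hab⟩, ?_⟩
  ext z
  constructor
  · rintro ⟨y, ⟨hyA, b', hb', hyb'⟩, hzy⟩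
    exact ⟨b', ⟨hb', y, hyA, hE.symm hyb'⟩, hE.trans hzy hyb'⟩
  · rintro ⟨y, ⟨hyB, a', ha', hya'⟩, hzy⟩
    exact ⟨a', ⟨ha', y, hyB, hE.symm hya'⟩, hE.trans hzy hya'⟩
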